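/- Let n ≥ 1 and let g : ℝⁿ → [0,∞) be measurable and radially nondecreasing, i.e. g(x) ≤ g(y) whenever ‖x‖ ≤ ‖y‖ (in particular g is spherically symmetric). Let A ⊆ ℝⁿ be measurable with finite Lebesgue measure and let B be a closed ball centred at the origin with the same Lebesgue measure as A. Then ∫_A g(x) dx ≥ ∫_B g(x) dx, both integrals taking values in [0,∞]. -/

import Mathlib

open MeasureTheory ENNReal

/-- For a radially nondecreasing nonnegative `g` on `ℝⁿ`, a measurable
set `A` of finite measure, and a closed ball `B` centred at the origin of the same
measure, `∫_A g ≥ ∫_B g` (integrals valued in `[0,∞]`). -/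
theorem stmt_11 (n : ℕ) (hn : 1 ≤ n) (g : EuclideanSpace ℝ (Fin n) → ℝ)
    (hgmeas : Measurable g) (hgnonneg : ∀ x, 0 ≤ g x)
    (hgmono : ∀ x y : EuclideanSpace ℝ (Fin n), ‖x‖ ≤ ‖y‖ → g x ≤ g y)
    (A : Set (EuclideanSpace ℝ (Fin n))) (hA : MeasurableSet A) (hAfin : volume A < ⊤)
    (r : ℝ) (hr : 0 ≤ r)
    (hvol : volume (Metric.closedBall (0 : EuclideanSpace ℝ (Fin n)) r) = volume A) :
    (∫⁻ x in Metric.closedBall (0 : EuclideanSpace ℝ (Fin n)) r, ENNReal.ofReal (g x)) ≤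
      ∫⁻ x in A, ENNReal.ofReal (g x) := by
  set B := Metric.closedBall (0 : EuclideanSpace ℝ (Fin n)) r with hBdef
  have hBmeas : MeasurableSet B := measurableSet_closedBall
  have key : ∀ t : ℝ, volume ({x | t < g x} ∩ B) ≤ volume ({x | t < g x} ∩ A) := by
    intro t
    set S := {x : EuclideanSpace ℝ (Fin n) | t < g x} with hSdef
    have hSmeas : MeasurableSet S := measurableSet_lt measurable_const hgmeas
    -- Sᶜ is radially downward closed
    have hdc : ∀ x ∈ Sᶜ, ∀ y : EuclideanSpace ℝ (Fin n), ‖y‖ ≤ ‖x‖ → y ∈ Sᶜ := by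
      intro x hx y hy
      simp only [Set.mem_compl_iff, hSdef, Set.mem_setOf_eq, not_lt] at *
      exact (hgmono y x hy).trans hx
    have hcompl : volume (A ∩ Sᶜ) ≤ volume (B ∩ Sᶜ) := by
      by_cases h : ∃ x ∈ Sᶜ, r ≤ ‖x‖
      · obtain ⟨x, hx, hxr⟩ := h
        have hBsub : B ⊆ Sᶜ := fun y hy =>
          hdc x hx y ((mem_closedBall_zero_iff.mp hy).trans hxr)
        have h1 : B ∩ Sᶜ = B := Set.inter_eq_left.mpr hBsub
        rw [h1, hvol]
        exact measure_mono Set.inter_subset_left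
      · push_neg at h
        have hSsub : Sᶜ ⊆ B := fun x hx =>
          mem_closedBall_zero_iff.mpr (le_of_lt (h x hx))
        have h1 : B ∩ Sᶜ = Sᶜ := Set.inter_eq_right.mpr hSsub
        rw [h1]
        exact measure_mono Set.inter_subset_right
    have hfinA : volume (A ∩ Sᶜ) ≠ ⊤ :=
      (lt_of_le_of_lt (measure_mono Set.inter_subset_left) hAfin).ne
    have hBsplit : volume (B ∩ S) + volume (B \ S) = volume B :=
      measure_inter_add_diff B hSmeas
    have hAsplit : volume (A ∩ S) + volume (A \ S) = volume A :=
      measure_inter_add_diff A hSmeas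
    have hdiffB : B \ S = B ∩ Sᶜ := Set.diff_eq B S
    have hdiffA : A \ S = A ∩ Sᶜ := Set.diff_eq A S
    have chain : volume (B ∩ S) + volume (A ∩ Sᶜ) ≤ volume (A ∩ S) + volume (A ∩ Sᶜ) := by
      calc volume (B ∩ S) + volume (A ∩ Sᶜ)
          ≤ volume (B ∩ S) + volume (B ∩ Sᶜ) := add_le_add le_rfl hcompl
        _ = volume B := by rw [← hdiffB, hBsplit]
        _ = volume A := hvol
        _ = volume (A ∩ S) + volume (A ∩ Sᶜ) := by rw [← hdiffA, hAsplit]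
    have := (ENNReal.add_le_add_iff_right hfinA).mp chain
    simpa [Set.inter_comm] using this
  have layerB := lintegral_eq_lintegral_meas_lt (volume.restrict B)
    (Filter.Eventually.of_forall hgnonneg) hgmeas.aemeasurable
  have layerA := lintegral_eq_lintegral_meas_lt (volume.restrict A)
    (Filter.Eventually.of_forall hgnonneg) hgmeas.aemeasurable
  rw [layerB, layerA]
  apply lintegral_mono
  intro t
  have hSmeas : MeasurableSet {x : EuclideanSpace ℝ (Fin n) | t < g x} :=
    measurableSet_lt measurable_const hgmeas
  simp only [Measure.restrict_apply hSmeas]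
  exact key t
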